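/- Let K be a field with char(K) ≠ 2,3 and c ∈ K with c ≠ 0. The polynomial map z ↦ z² + c is conjugate over K to the rational map ψ(z) = 2z²/(-z² + 4z - 4c); equivalently, the fixed point multipliers of z² + c are 0 and the two roots λ of λ² - 2λ + 4c = 0 (so they sum to 2 and multiply to 4c), and ψ is the map of Lemma (a) with σ₁ = 2 and σ₂ = 4c. -/

import Mathlib

/-- For c ≠ 0, the polynomial z² + c is conjugate over K to
ψ(z) = 2z²/(-z² + 4z - 4c): there is a Möbius transformation h over K with
h ∘ ψ = φ ∘ h where φ(z) = z² + c.  Moreover, every finite fixed point P of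
z² + c has multiplier 2P satisfying λ² - 2λ + 4c = 0. -/
theorem stmt19 (K : Type*) [Field K] (h2 : (2 : K) ≠ 0) (h3 : (3 : K) ≠ 0)
    (c : K) (hc : c ≠ 0) :
    (∃ a b c₂ d₂ : K, a * d₂ - b * c₂ ≠ 0 ∧
      ∀ z : K, -z ^ 2 + 4 * z - 4 * c ≠ 0 → c₂ * z + d₂ ≠ 0 →
        c₂ * (2 * z ^ 2 / (-z ^ 2 + 4 * z - 4 * c)) + d₂ ≠ 0 →
        (a * (2 * z ^ 2 / (-z ^ 2 + 4 * z - 4 * c)) + b)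
            / (c₂ * (2 * z ^ 2 / (-z ^ 2 + 4 * z - 4 * c)) + d₂)
          = ((a * z + b) / (c₂ * z + d₂)) ^ 2 + c) ∧
    (∀ P : K, P ^ 2 + c = P → (2 * P) ^ 2 - 2 * (2 * P) + 4 * c = 0) := by
  constructor
  · refine ⟨1, -2 * c, 1, 0, ?_, ?_⟩
    · simpa using mul_ne_zero h2 hc
    · intro z hden hz hpsi
      field_simp at hz hpsi ⊢
      have hden' : z * (-z + 4) - 4 * c ≠ 0 := by intro h; apply hden; linear_combination h
      field_simp
      ring
  · intro P hP
    linear_combination 4 * hP
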